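/- For each X ∈ L_n there is a unique maximal pointed convex cone D_X in R^{n+1} with X = D_X ∩ Φ_n^+. That is, if D and D' are maximal pointed convex cones in R^{n+1} with D ∩ Φ_n^+ = D' ∩ Φ_n^+, then D = D'. -/

import Mathlib

open Set

noncomputable section

def IsCone {V : Type*} [AddCommGroup V] [Module ℝ V] (C : Set V) : Prop :=
  (0 : V) ∈ C ∧ ∀ r : ℝ, 0 ≤ r → ∀ v ∈ C, r • v ∈ C

def IsConvexCone {V : Type*} [AddCommGroup V] [Module ℝ V] (C : Set V) : Prop :=
  IsCone C ∧ ∀ u ∈ C, ∀ v ∈ C, u + v ∈ C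

def IsMaxPointedCone {V : Type*} [AddCommGroup V] [Module ℝ V] (D : Set V) : Prop :=
  IsConvexCone D ∧ D ∩ (-D) = {0} ∧ D ∪ (-D) = Set.univ

def hatCone {V : Type*} [AddCommGroup V] [Module ℝ V] (X : Set V) : Set V :=
  {0} ∪ {v | ∃ r : ℝ, 0 ≤ r ∧ ∃ x ∈ X, v = r • x}

def sphereN (n : ℕ) : Set (EuclideanSpace ℝ (Fin (n + 1))) := Metric.sphere 0 1

def PhiPlus (n : ℕ) : Set (EuclideanSpace ℝ (Fin (n + 1))) :=
  {x | x ∈ sphereN n ∧ ∃ m : Fin (n + 1), 0 < x m ∧ ∀ i, m < i → x i = 0}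

def PhiMinus (n : ℕ) : Set (EuclideanSpace ℝ (Fin (n + 1))) := {x | -x ∈ PhiPlus n}

def Ln (n : ℕ) : Set (Set (EuclideanSpace ℝ (Fin (n + 1)))) :=
  {X | ∃ D, IsMaxPointedCone D ∧ X = D ∩ PhiPlus n}

lemma phiPlus_or_neg (n : ℕ) (x : EuclideanSpace ℝ (Fin (n + 1))) (hx : ‖x‖ = 1) :
    x ∈ PhiPlus n ∨ -x ∈ PhiPlus n := by
  have hx0 : x ≠ 0 := by intro h; rw [h, norm_zero] at hx; norm_num at hx
  have hexists : ∃ i, x i ≠ 0 := by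
    by_contra hc
    push_neg at hc
    exact hx0 (PiLp.ext fun i => by simp [hc i])
  set S : Finset (Fin (n + 1)) := Finset.univ.filter (fun i => x i ≠ 0) with hS
  have hSne : S.Nonempty := by
    obtain ⟨i, hi⟩ := hexists
    exact ⟨i, by simp [hS, hi]⟩
  set m := S.max' hSne with hm
  have hmS : m ∈ S := S.max'_mem hSne
  have hxm : x m ≠ 0 := by simpa [hS] using hmS
  have hzero : ∀ i, m < i → x i = 0 := by
    intro i hi
    by_contra hxi
    have : i ∈ S := by simp [hS, hxi]
    exact absurd (S.le_max' i this) (not_le.mpr hi)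
  have hsph : x ∈ sphereN n := by
    simp [sphereN, Metric.mem_sphere, dist_zero_right, hx]
  rcases lt_or_gt_of_ne hxm with hneg | hpos
  · right
    refine ⟨?_, m, ?_, ?_⟩
    · simp [sphereN, Metric.mem_sphere, dist_zero_right, hx]
    · show 0 < (-x) m
      simp only [PiLp.neg_apply]
      linarith
    · intro i hi
      show (-x) i = 0
      simp [PiLp.neg_apply, hzero i hi]
  · left
    exact ⟨hsph, m, hpos, hzero⟩

lemma maxCone_subset (n : ℕ) (D D' : Set (EuclideanSpace ℝ (Fin (n + 1))))
    (hD : IsMaxPointedCone D) (hD' : IsMaxPointedCone D')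
    (h : D ∩ PhiPlus n = D' ∩ PhiPlus n) : D ⊆ D' := by
  intro v hv
  by_cases hv0 : v = 0
  · rw [hv0]; exact hD'.1.1.1
  set u := ‖v‖⁻¹ • v with hu
  have hnv : (0:ℝ) < ‖v‖ := norm_pos_iff.mpr hv0
  have hunorm : ‖u‖ = 1 := by
    rw [hu, norm_smul, norm_inv, norm_norm, inv_mul_cancel₀ (ne_of_gt hnv)]
  have huD : u ∈ D := hD.1.1.2 _ (inv_nonneg.mpr hnv.le) v hv
  have hvu : v = ‖v‖ • u := by
    rw [hu, smul_smul, mul_inv_cancel₀ (ne_of_gt hnv), one_smul]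
  have hu0 : u ≠ 0 := by
    intro hc; rw [hc, norm_zero] at hunorm; norm_num at hunorm
  have huD' : u ∈ D' := by
    rcases phiPlus_or_neg n u hunorm with hp | hp
    · have : u ∈ D' ∩ PhiPlus n := h ▸ (Set.mem_inter huD hp)
      exact this.1
    · -- -u ∈ PhiPlus; -u ∉ D (pointedness), so -u ∉ D', so u ∈ D'
      have hnuD : -u ∉ D := by
        intro hc
        have : u ∈ D ∩ (-D) := ⟨huD, by simpa using hc⟩
        rw [hD.2.1] at this
        exact hu0 this
      have hnuD' : -u ∉ D' := by
        intro hc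
        have : -u ∈ D' ∩ PhiPlus n := ⟨hc, hp⟩
        rw [← h] at this
        exact hnuD this.1
      have := hD'.2.2
      have hmem : u ∈ D' ∪ (-D') := by rw [this]; trivial
      rcases hmem with hmem | hmem
      · exact hmem
      · exact absurd (by simpa using hmem) hnuD'
  rw [hvu]
  exact hD'.1.1.2 _ hnv.le u huD'

theorem stmt15 (n : ℕ) (D D' : Set (EuclideanSpace ℝ (Fin (n + 1))))
    (hD : IsMaxPointedCone D) (hD' : IsMaxPointedCone D')
    (h : D ∩ PhiPlus n = D' ∩ PhiPlus n) :
    D = D' :=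
  Set.Subset.antisymm (maxCone_subset n D D' hD hD' h)
    (maxCone_subset n D' D hD' hD h.symm)
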